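/- Let a > 0, γ > 1, φ_{a,γ}(v) = 2^γ·(1 + e^{a v})^{−γ}, and for η ∈ [0,1] define C_η(v) = η·φ_{a,γ}(v) + (1−η)·φ_{a,γ}(−v). Then for every η ∈ [0,1] with η ≠ 1/2: (a) C_η(v) ≥ 1 for every v ∈ ℝ with v·(2η−1) ≤ 0; and (b) there exists v ∈ ℝ with C_η(v) < 1. Consequently inf{C_η(v) : v(2η−1) ≤ 0} > inf{C_η(v) : v ∈ ℝ}, i.e. φ_{a,γ} is classification calibrated (Condition (iii)). -/

import Mathlib

open Real Filter

/-- The γ-robust loss φ_{a,γ}(v) = 2^γ·(1 + e^{a v})^{−γ}. -/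
noncomputable def gammaRobust (a γ : ℝ) (v : ℝ) : ℝ :=
  (2:ℝ) ^ γ * (1 + Real.exp (a * v)) ^ (-γ)

lemma gammaRobust_pos (a γ v : ℝ) : 0 < gammaRobust a γ v := by
  unfold gammaRobust
  have : (0:ℝ) < 1 + Real.exp (a * v) := by positivity
  positivity

lemma two_rpow_mul_inv (γ : ℝ) : (2:ℝ) ^ γ * (2:ℝ) ^ (-γ) = 1 := by
  rw [← Real.rpow_add (by norm_num)]
  simp

lemma gammaRobust_zero (a γ : ℝ) : gammaRobust a γ 0 = 1 := by
  unfold gammaRobust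
  rw [mul_zero, Real.exp_zero]
  norm_num [two_rpow_mul_inv γ]

lemma gammaRobust_ge_one (a γ : ℝ) (ha : 0 ≤ a) (hγ : 0 ≤ γ) (v : ℝ) (hv : v ≤ 0) :
    1 ≤ gammaRobust a γ v := by
  have hav : a * v ≤ 0 := mul_nonpos_of_nonneg_of_nonpos ha hv
  have h1 : (1:ℝ) + Real.exp (a * v) ≤ 2 := by
    have := Real.exp_le_one_iff.mpr hav
    linarith
  have h0 : (0:ℝ) < 1 + Real.exp (a * v) := by positivity
  have h2 : (2:ℝ) ^ (-γ) ≤ (1 + Real.exp (a * v)) ^ (-γ) :=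
    Real.rpow_le_rpow_of_nonpos h0 h1 (by linarith)
  calc (1:ℝ) = (2:ℝ) ^ γ * (2:ℝ) ^ (-γ) := (two_rpow_mul_inv γ).symm
    _ ≤ (2:ℝ) ^ γ * (1 + Real.exp (a * v)) ^ (-γ) := by
        apply mul_le_mul_of_nonneg_left h2 (by positivity)
    _ = gammaRobust a γ v := rfl

lemma gammaRobust_add_ge (a γ v : ℝ) (hγ : 1 ≤ γ) :
    2 ≤ gammaRobust a γ v + gammaRobust a γ (-v) := by
  set t := Real.exp (a * v) with ht
  have ht0 : 0 < t := Real.exp_pos _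
  have hneg : Real.exp (a * -v) = t⁻¹ := by
    rw [ht, ← Real.exp_neg]; ring_nf
  have h1t : (0:ℝ) < 1 + t := by positivity
  -- rewrite second term
  have hsplit : (1 + t⁻¹ : ℝ) = (1 + t) * t⁻¹ := by field_simp; ring
  have hterm2 : (1 + t⁻¹ : ℝ) ^ (-γ) = (1 + t) ^ (-γ) * t ^ γ := by
    rw [hsplit, Real.mul_rpow h1t.le (by positivity), Real.inv_rpow ht0.le,
      ← Real.rpow_neg ht0.le, neg_neg]
  have hconv := (convexOn_rpow hγ).2 (Set.mem_Ici.2 zero_le_one)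
      (Set.mem_Ici.2 ht0.le) (by norm_num : (0:ℝ) ≤ 1/2) (by norm_num : (0:ℝ) ≤ 1/2)
      (by norm_num)
  simp only [smul_eq_mul, mul_one, Real.one_rpow] at hconv
  -- hconv : (1/2 + 1/2 * t) ^ γ ≤ 1/2 + 1/2 * t ^ γ
  have hdiv : ((1 + t) / 2 : ℝ) ^ γ = (1 + t) ^ γ / 2 ^ γ :=
    Real.div_rpow h1t.le (by norm_num : (0:ℝ) ≤ 2) γ
  have heq : (1/2 + 1/2 * t : ℝ) = (1 + t) / 2 := by ring
  rw [heq, hdiv] at hconv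
  -- so (1+t)^γ / 2^γ ≤ 1/2 + 1/2 * t^γ
  have hP : (0:ℝ) < (1 + t) ^ γ := Real.rpow_pos_of_pos h1t _
  have h2γ : (0:ℝ) < (2:ℝ) ^ γ := Real.rpow_pos_of_pos (by norm_num) _
  have hinv : (1 + t) ^ (-γ) * (1 + t) ^ γ = 1 := by
    rw [← Real.rpow_add h1t]; simp
  have hQ : (0:ℝ) < (1 + t) ^ (-γ) := Real.rpow_pos_of_pos h1t _
  have key : 2 ≤ (2:ℝ) ^ γ * (1 + t) ^ (-γ) * (1 + t ^ γ) := by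
    have h3 : 2 * ((1 + t) ^ γ / 2 ^ γ) ≤ 1 + t ^ γ := by linarith
    calc (2:ℝ) = (2:ℝ) ^ γ * (1 + t) ^ (-γ) * (2 * ((1 + t) ^ γ / 2 ^ γ)) := by
          field_simp
          nlinarith [hinv]
      _ ≤ (2:ℝ) ^ γ * (1 + t) ^ (-γ) * (1 + t ^ γ) := by
          apply mul_le_mul_of_nonneg_left h3 (by positivity)
  unfold gammaRobust
  rw [hneg, hterm2]
  nlinarith [key, h2γ, hQ]

lemma hasDerivAt_gammaRobust_zero (a γ : ℝ) :
    HasDerivAt (gammaRobust a γ) (-(γ * a / 2)) 0 := by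
  have h1 : HasDerivAt (fun v : ℝ => a * v) a 0 := by
    simpa using (hasDerivAt_id (0:ℝ)).const_mul a
  have h2 : HasDerivAt (fun v : ℝ => Real.exp (a * v)) a 0 := by
    have := (Real.hasDerivAt_exp (a * 0)).comp 0 h1
    simpa [Function.comp_def] using this
  have h3 : HasDerivAt (fun v : ℝ => 1 + Real.exp (a * v)) a 0 := h2.const_add 1
  have hpt : (fun v : ℝ => 1 + Real.exp (a * v)) 0 = 2 := by
    simp [Real.exp_zero]; norm_num
  have h4 : HasDerivAt (fun x : ℝ => x ^ (-γ))
      (-γ * (2:ℝ) ^ (-γ - 1)) ((fun v : ℝ => 1 + Real.exp (a * v)) 0) := by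
    rw [hpt]
    exact Real.hasDerivAt_rpow_const (Or.inl two_ne_zero)
  have h5 : HasDerivAt (fun v : ℝ => (1 + Real.exp (a * v)) ^ (-γ))
      (-γ * (2:ℝ) ^ (-γ - 1) * a) 0 := by have := h4.comp 0 h3; exact this
  have h6 := h5.const_mul ((2:ℝ) ^ γ)
  have heq : (2:ℝ) ^ γ * (-γ * (2:ℝ) ^ (-γ - 1) * a) = -(γ * a / 2) := by
    have : (2:ℝ) ^ γ * (2:ℝ) ^ (-γ - 1) = 1 / 2 := by
      rw [← Real.rpow_add (by norm_num)]
      have : γ + (-γ - 1) = -1 := by ring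
      rw [this, Real.rpow_neg_one]
      norm_num
    linear_combination (-γ * a) * this
  rw [heq] at h6
  exact h6

theorem stmt6 (a γ : ℝ) (ha : 0 < a) (hγ : 1 < γ)
    (η : ℝ) (hη : η ∈ Set.Icc (0:ℝ) 1) (hne : η ≠ 1/2)
    (C : ℝ → ℝ)
    (hC : ∀ v : ℝ, C v = η * gammaRobust a γ v + (1 - η) * gammaRobust a γ (-v)) :
    (∀ v : ℝ, v * (2 * η - 1) ≤ 0 → 1 ≤ C v) ∧
    (∃ v : ℝ, C v < 1) ∧
    sInf (Set.range C) < sInf (C '' {v : ℝ | v * (2 * η - 1) ≤ 0}) := by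
  obtain ⟨hη0, hη1⟩ := hη
  have hγ0 : (0:ℝ) ≤ γ := by linarith
  -- Part (a)
  have parta : ∀ v : ℝ, v * (2 * η - 1) ≤ 0 → 1 ≤ C v := by
    intro v hv
    rw [hC v]
    have hsum := gammaRobust_add_ge a γ v hγ.le
    rcases lt_or_gt_of_ne hne with hlt | hgt
    · have hv0 : 0 ≤ v := by nlinarith
      have hφ : 1 ≤ gammaRobust a γ (-v) :=
        gammaRobust_ge_one a γ ha.le hγ0 (-v) (by linarith)
      have h1 := mul_le_mul_of_nonneg_left hsum hη0
      have h2 := mul_le_mul_of_nonneg_left hφ (by linarith : (0:ℝ) ≤ 1 - 2 * η)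
      nlinarith
    · have hv0 : v ≤ 0 := by nlinarith
      have hφ : 1 ≤ gammaRobust a γ v := gammaRobust_ge_one a γ ha.le hγ0 v hv0
      have h1 := mul_le_mul_of_nonneg_left hsum (by linarith : (0:ℝ) ≤ 1 - η)
      have h2 := mul_le_mul_of_nonneg_left hφ (by linarith : (0:ℝ) ≤ 2 * η - 1)
      nlinarith
  -- C 0 = 1
  have hC0 : C 0 = 1 := by
    rw [hC 0, neg_zero, gammaRobust_zero]; ring
  -- Derivative of C at 0
  have hd1 := hasDerivAt_gammaRobust_zero a γ
  have hd1' : HasDerivAt (gammaRobust a γ) (-(γ * a / 2)) (-(0:ℝ)) := by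
    simpa using hd1
  have hdneg : HasDerivAt (fun v : ℝ => gammaRobust a γ (-v)) (γ * a / 2) 0 := by
    have := hd1'.comp 0 (hasDerivAt_neg' (0:ℝ))
    simpa [Function.comp_def] using this
  have hD : HasDerivAt C ((1 - 2 * η) * (γ * a / 2)) 0 := by
    have h := (hd1.const_mul η).add (hdneg.const_mul (1 - η))
    have h' : HasDerivAt C (η * -(γ * a / 2) + (1 - η) * (γ * a / 2)) 0 :=
      h.congr_of_eventuallyEq (Filter.Eventually.of_forall hC)
    convert h' using 1; ring
  have hslope := hasDerivAt_iff_tendsto_slope.mp hD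
  -- Part (b)
  have partb : ∃ v : ℝ, C v < 1 := by
    rcases lt_or_gt_of_ne hne with hlt | hgt
    · -- derivative positive, go left
      have hDpos : 0 < (1 - 2 * η) * (γ * a / 2) :=
        mul_pos (by linarith) (by positivity)
      have hev : ∀ᶠ v in nhdsWithin (0:ℝ) (Set.Iio 0), 0 < slope C 0 v :=
        (hslope.comp (tendsto_nhdsWithin_mono_left (by
          intro x hx; exact Set.mem_compl_singleton_iff.mpr (ne_of_lt hx)) tendsto_id)).eventually
          (eventually_gt_nhds hDpos)
      obtain ⟨v, hsl, hvmem⟩ := (hev.and self_mem_nhdsWithin).exists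
      refine ⟨v, ?_⟩
      have hvneg : v < 0 := hvmem
      rw [slope_def_field, hC0, sub_zero] at hsl
      rcases (div_pos_iff).mp hsl with ⟨h1, h2⟩ | ⟨h1, h2⟩
      · linarith
      · linarith
    · have hDneg : (1 - 2 * η) * (γ * a / 2) < 0 := by
        have h := mul_pos (show (0:ℝ) < 2 * η - 1 by linarith)
          (show (0:ℝ) < γ * a / 2 by positivity)
        nlinarith
      have hev : ∀ᶠ v in nhdsWithin (0:ℝ) (Set.Ioi 0), slope C 0 v < 0 :=
        (hslope.comp (tendsto_nhdsWithin_mono_left (by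
          intro x hx; exact Set.mem_compl_singleton_iff.mpr (ne_of_gt hx)) tendsto_id)).eventually
          (eventually_lt_nhds hDneg)
      obtain ⟨v, hsl, hvmem⟩ := (hev.and self_mem_nhdsWithin).exists
      refine ⟨v, ?_⟩
      have hvpos : 0 < v := hvmem
      rw [slope_def_field, hC0, sub_zero] at hsl
      rcases (div_neg_iff).mp hsl with ⟨h1, h2⟩ | ⟨h1, h2⟩
      · linarith
      · linarith
  refine ⟨parta, partb, ?_⟩
  obtain ⟨v0, hv0⟩ := partb
  have hbdd : BddBelow (Set.range C) := by
    refine ⟨0, ?_⟩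
    rintro _ ⟨v, rfl⟩
    rw [hC v]
    have h1 := gammaRobust_pos a γ v
    have h2 := gammaRobust_pos a γ (-v)
    nlinarith
  have hne' : (C '' {v : ℝ | v * (2 * η - 1) ≤ 0}).Nonempty :=
    ⟨C 0, ⟨0, by simp, rfl⟩⟩
  calc sInf (Set.range C) ≤ C v0 := csInf_le hbdd ⟨v0, rfl⟩
    _ < 1 := hv0
    _ ≤ sInf (C '' {v : ℝ | v * (2 * η - 1) ≤ 0}) := by
        apply le_csInf hne'
        rintro _ ⟨v, hv, rfl⟩
        exact parta v hv
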